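/- arXiv:1511.07475 — 3 statements merged into one kernel-verified Lean document; each statement's English description precedes it below -/
import Mathlib

section
/- Let S be an integral scheme (reduced and irreducible) which is normal in the sense that the local ring of S at every point is an integrally closed domain, let η be the generic point of S, and let f : F ⟶ S be a finite morphism of schemes. Then composition with the canonical morphism Spec κ(η) ⟶ S induces a bijection from the set of sections of f (morphisms σ : S ⟶ F with f ∘ σ = id_S) to the set of morphisms τ : Spec κ(η) ⟶ F satisfying f ∘ τ = (the canonical morphism Spec κ(η) ⟶ S). -/
open AlgebraicGeometry CategoryTheory CategoryTheory.Limits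

universe u

namespace SectionsBijAux

lemma exists_ringHom_factor {A B K : Type u} [CommRing A] [CommRing B] [CommRing K]
    [IsDomain A] [IsIntegrallyClosed A] [Algebra A K] [IsFractionRing A K]
    (ι : A →+* B) (β : B →+* K) (hβι : β.comp ι = algebraMap A K) (hfin : ι.Finite) :
    ∃ ψ : B →+* A, (algebraMap A K).comp ψ = β := by
  letI : Algebra A B := ι.toAlgebra
  haveI : Module.Finite A B := hfin
  haveI : Algebra.IsIntegral A B := Algebra.IsIntegral.of_finite A B
  let βalg : B →ₐ[A] K :=
    { toRingHom := β, commutes' := fun a => RingHom.congr_fun hβι a }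
  have h : ∀ b : B, ∃ a : A, algebraMap A K a = β b := fun b =>
    IsIntegrallyClosed.isIntegral_iff.mp ((Algebra.IsIntegral.isIntegral (R := A) b).map βalg)
  choose ψ hψ using h
  have inj := IsFractionRing.injective A K
  refine ⟨⟨⟨⟨ψ, ?_⟩, ?_⟩, ?_, ?_⟩, ?_⟩
  · apply inj; rw [hψ, map_one, map_one]
  · intro a b; apply inj; rw [hψ, map_mul, map_mul, hψ, hψ]
  · apply inj; rw [hψ, map_zero, map_zero]
  · intro a b; apply inj; rw [hψ, map_add, map_add, hψ, hψ]
  · exact RingHom.ext fun b => hψ b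

lemma exists_lift_spec_stalk {S F : Scheme.{u}} [IsIntegral S] (f : F ⟶ S) [IsFinite f]
    (x : S) [IsDomain (S.presheaf.stalk x)] [IsIntegrallyClosed (S.presheaf.stalk x)]
    (τ' : Spec S.functionField ⟶ F) (hτ' : τ' ≫ f = S.fromSpecStalk (genericPoint S)) :
    ∃ φ : Spec (S.presheaf.stalk x) ⟶ F, φ ≫ f = S.fromSpecStalk x ∧
      Spec.map (S.presheaf.stalkSpecializes
        ((genericPoint_spec S).specializes trivial)) ≫ φ = τ' := by
  let A : CommRingCat := S.presheaf.stalk x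
  let K : CommRingCat := S.functionField
  let α : A ⟶ K := S.presheaf.stalkSpecializes ((genericPoint_spec S).specializes trivial)
  have halg : algebraMap A K = α.hom := rfl
  have hPfin : IsFinite (pullback.snd f (S.fromSpecStalk x)) :=
    inferInstance
  obtain ⟨hPaff, hfin⟩ : IsAffine (pullback f (S.fromSpecStalk x)) ∧
      (pullback.snd f (S.fromSpecStalk x)).appTop.hom.Finite :=
    ⟨isAffine_of_isAffineHom (pullback.snd f (S.fromSpecStalk x)),
      hPfin.finite_app ⊤ (isAffineOpen_top _)⟩
  haveI := hPaff
  have hcomm : τ' ≫ f = Spec.map α ≫ S.fromSpecStalk x := by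
    rw [hτ', Scheme.SpecMap_stalkSpecializes_fromSpecStalk]
  let u : Spec K ⟶ pullback f (S.fromSpecStalk x) := pullback.lift τ' (Spec.map α) hcomm
  let B : CommRingCat := Γ(pullback f (S.fromSpecStalk x), ⊤)
  let ι : A ⟶ B := (Scheme.ΓSpecIso A).inv ≫ (pullback.snd f (S.fromSpecStalk x)).appTop
  let β : B ⟶ K := u.appTop ≫ (Scheme.ΓSpecIso K).hom
  have hβι : ι ≫ β = α := by
    show (Scheme.ΓSpecIso A).inv ≫ (pullback.snd f (S.fromSpecStalk x)).appTop ≫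
      u.appTop ≫ (Scheme.ΓSpecIso K).hom = α
    rw [← Scheme.Hom.comp_appTop_assoc, pullback.lift_snd, Scheme.ΓSpecIso_naturality,
      Iso.inv_hom_id_assoc]
  have hιfin : RingHom.Finite ι.hom := by
    have := RingHom.finite_respectsIso.2 (pullback.snd f (S.fromSpecStalk x)).appTop.hom
      (Scheme.ΓSpecIso A).symm.commRingCatIsoToRingEquiv hfin
    exact this
  obtain ⟨ψ, hψ⟩ := exists_ringHom_factor ι.hom β.hom
    ((show β.hom.comp ι.hom = α.hom from congrArg CommRingCat.Hom.hom hβι).trans halg.symm) hιfin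
  have hψβ : CommRingCat.ofHom ψ ≫ α = β :=
    CommRingCat.hom_ext (by rw [CommRingCat.hom_comp, CommRingCat.hom_ofHom, ← halg]; exact hψ)
  have hιψ : ι ≫ CommRingCat.ofHom ψ = 𝟙 A := by
    refine CommRingCat.hom_ext (RingHom.ext fun a => IsFractionRing.injective A K ?_)
    have h1 := RingHom.congr_fun hψ (ι a)
    have h2 : β.hom (ι.hom a) = α.hom a := congrArg (fun φ : A ⟶ K => φ.hom a) hβι
    simp only [RingHom.comp_apply] at h1 h2
    rw [halg] at h1
    exact h1.trans h2
  let w : Spec A ⟶ pullback f (S.fromSpecStalk x) :=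
    Spec.map (CommRingCat.ofHom ψ) ≫ (pullback f (S.fromSpecStalk x)).isoSpec.inv
  have key1 : w ≫ pullback.snd f (S.fromSpecStalk x) = 𝟙 (Spec A) := by
    rw [← cancel_mono (Spec A).toSpecΓ]
    rw [Category.assoc, Scheme.toSpecΓ_naturality]
    show Spec.map (CommRingCat.ofHom ψ) ≫ (pullback f (S.fromSpecStalk x)).isoSpec.inv ≫
      (pullback f (S.fromSpecStalk x)).isoSpec.hom ≫
      Spec.map ((pullback.snd f (S.fromSpecStalk x)).appTop) = _
    rw [Iso.inv_hom_id_assoc, ← Spec.map_comp, Category.id_comp, ← SpecMap_ΓSpecIso_hom]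
    congr 1
    have : (pullback.snd f (S.fromSpecStalk x)).appTop = (Scheme.ΓSpecIso A).hom ≫ ι := by
      simp [ι]
    rw [this, Category.assoc, hιψ, Category.comp_id]
  have key2 : Spec.map α ≫ w = u := by
    rw [← cancel_mono (pullback f (S.fromSpecStalk x)).isoSpec.hom]
    show Spec.map α ≫ Spec.map (CommRingCat.ofHom ψ) ≫
        (pullback f (S.fromSpecStalk x)).isoSpec.inv ≫
        (pullback f (S.fromSpecStalk x)).isoSpec.hom = _
    erw [Iso.inv_hom_id, Category.comp_id, ← Spec.map_comp]
    show _ = u ≫ (pullback f (S.fromSpecStalk x)).toSpecΓ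
    rw [Scheme.toSpecΓ_naturality, ← SpecMap_ΓSpecIso_hom, ← Spec.map_comp]
    exact congrArg Spec.map hψβ
  refine ⟨w ≫ pullback.fst f (S.fromSpecStalk x), ?_, ?_⟩
  · rw [Category.assoc, pullback.condition, ← Category.assoc, key1, Category.id_comp]
  · rw [← Category.assoc]
    show (Spec.map α ≫ w) ≫ _ = _
    rw [key2, pullback.lift_fst]

lemma isDominant_fromSpecStalkOfMem {S : Scheme.{u}} [IsIntegral S] (W : S.Opens)
    (hηW : genericPoint S ∈ W) :
    IsDominant (W.fromSpecStalkOfMem (genericPoint S) hηW) := by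
  haveI : Nonempty W := ⟨⟨_, hηW⟩⟩
  constructor
  have hp : W.ι.base ((W.fromSpecStalkOfMem (genericPoint S) hηW).base
      (IsLocalRing.closedPoint _)) = genericPoint S := by
    change (W.fromSpecStalkOfMem (genericPoint S) hηW ≫ W.ι).base (IsLocalRing.closedPoint _) = _
    rw [Scheme.Opens.fromSpecStalkOfMem_ι,
      Scheme.fromSpecStalk_closedPoint]
  have hp2 : (W.fromSpecStalkOfMem (genericPoint S) hηW).base (IsLocalRing.closedPoint _)
      = genericPoint W.toScheme := by
    apply W.ι.isOpenEmbedding.injective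
    rw [hp, genericPoint_eq_of_isOpenImmersion W.ι]
  rw [DenseRange, dense_iff_closure_eq]
  apply Set.eq_univ_of_univ_subset
  calc (Set.univ : Set W.toScheme) = closure {genericPoint W.toScheme} :=
        ((genericPoint_spec W.toScheme).def).symm
    _ ⊆ closure (Set.range (W.fromSpecStalkOfMem (genericPoint S) hηW).base) := by
        apply closure_mono
        rw [Set.singleton_subset_iff, ← hp2]
        exact Set.mem_range_self _

lemma isDominant_fromSpecResidueField {S : Scheme.{u}} [IsIntegral S] :
    IsDominant (S.fromSpecResidueField (genericPoint S)) := by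
  constructor
  rw [DenseRange, Scheme.range_fromSpecResidueField, dense_iff_closure_eq]
  exact (genericPoint_spec S).def

lemma isIso_residue_genericPoint {S : Scheme.{u}} [IsIntegral S] :
    IsIso (S.residue (genericPoint S)) := by
  have hb : Function.Bijective (S.residue (genericPoint S)) :=
    ⟨(S.residue (genericPoint S)).hom.injective,
      Ideal.Quotient.mk_surjective⟩
  exact (RingEquiv.ofBijective (S.residue (genericPoint S)).hom
    hb).toCommRingCatIso.isIso_hom

lemma fromSpecResidueField_eq {S : Scheme.{u}} (x : S) :
    S.fromSpecResidueField x = Spec.map (S.residue x) ≫ S.fromSpecStalk x := rfl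

end SectionsBijAux

open SectionsBijAux

open AlgebraicGeometry CategoryTheory

/-- For an integral normal scheme `S` with generic point `η` and a finite morphism
`f : F ⟶ S`, composition with the canonical morphism `Spec κ(η) ⟶ S` is a bijection
from the sections of `f` over `S` to the morphisms `Spec κ(η) ⟶ F` over `S`. -/
theorem sections_bijective_of_finite_of_normal
    {S F : Scheme} [IsIntegral S]
    (hnorm : ∀ x : S, IsDomain (S.presheaf.stalk x) ∧
      IsIntegrallyClosed (S.presheaf.stalk x))
    (η : S) (hgen : IsGenericPoint η Set.univ)
    (f : F ⟶ S) [hf : IsFinite f] :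
    Function.Bijective
      (fun σ : {σ : S ⟶ F // σ ≫ f = 𝟙 S} =>
        (⟨S.fromSpecResidueField η ≫ σ.1, by
            rw [Category.assoc, σ.2, Category.comp_id]⟩ :
          {τ : Spec (S.residueField η) ⟶ F // τ ≫ f = S.fromSpecResidueField η})) := by
  have hη : η = genericPoint S := hgen.eq (genericPoint_spec S)
  subst hη
  haveI : IsSeparated f := IsSeparated.of_isAffineHom f
  constructor
  · -- injectivity
    intro σ₁ σ₂ h
    haveI := isDominant_fromSpecResidueField (S := S)
    exact Subtype.ext (ext_of_isDominant_of_isSeparated f (by rw [σ₁.2, σ₂.2])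
      (S.fromSpecResidueField (genericPoint S))
      (congrArg Subtype.val h))
  · -- surjectivity
    rintro ⟨τ, hτ⟩
    haveI := isIso_residue_genericPoint (S := S)
    set τ' : Spec S.functionField ⟶ F :=
      inv (Spec.map (S.residue (genericPoint S))) ≫ τ with hτ'def
    have hτ'f : τ' ≫ f = S.fromSpecStalk (genericPoint S) := by
      rw [hτ'def, Category.assoc, hτ, fromSpecResidueField_eq, IsIso.inv_hom_id_assoc]
    -- local sections
    have loc : ∀ x : S, ∃ (U : S.Opens) (hxU : x ∈ U) (g : U.toScheme ⟶ F),
        g ≫ f = U.ι ∧ ∀ (hηU : genericPoint S ∈ U),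
          U.fromSpecStalkOfMem (genericPoint S) hηU ≫ g = τ' := by
      intro x
      haveI := (hnorm x).1
      haveI := (hnorm x).2
      obtain ⟨φ, hφf, hφτ⟩ := exists_lift_spec_stalk f x τ' hτ'f
      obtain ⟨U, hxU, g, hg1, hg2⟩ := spread_out_of_isGermInjective' (𝟙 S) f φ
        (by rw [hφf, Category.comp_id])
      refine ⟨U, hxU, g, by rw [hg2, Category.comp_id], fun hηU => ?_⟩
      have hstalkmap : Spec.map (S.presheaf.stalkSpecializes
            ((genericPoint_spec S).specializes trivial)) ≫ U.fromSpecStalkOfMem x hxU =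
          U.fromSpecStalkOfMem (genericPoint S) hηU := by
        rw [← cancel_mono U.ι, Category.assoc, Scheme.Opens.fromSpecStalkOfMem_ι,
          Scheme.Opens.fromSpecStalkOfMem_ι, Scheme.SpecMap_stalkSpecializes_fromSpecStalk]
      rw [← hstalkmap, Category.assoc, ← hg1, hφτ]
    choose U hxU g hgf hgτ using loc
    have hηU : ∀ x : S, genericPoint S ∈ U x := fun x =>
      ((genericPoint_spec S).mem_open_set_iff (U x).2).mpr ⟨x, trivial, hxU x⟩
    -- uniqueness principle
    have uniq : ∀ (W : S.Opens) (hηW : genericPoint S ∈ W) (h₁ h₂ : W.toScheme ⟶ F),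
        h₁ ≫ f = h₂ ≫ f →
        W.fromSpecStalkOfMem (genericPoint S) hηW ≫ h₁ =
          W.fromSpecStalkOfMem (genericPoint S) hηW ≫ h₂ → h₁ = h₂ := by
      intro W hηW h₁ h₂ e1 e2
      haveI : Nonempty W := ⟨⟨_, hηW⟩⟩
      haveI := isDominant_fromSpecStalkOfMem W hηW
      exact ext_of_isDominant_of_isSeparated f e1
        (W.fromSpecStalkOfMem (genericPoint S) hηW) e2
    -- compatibility of fromSpecStalkOfMem with homOfLE
    have hres : ∀ {V W' : S.Opens} (hVW : V ≤ W') (hηV : genericPoint S ∈ V),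
        V.fromSpecStalkOfMem (genericPoint S) hηV ≫ S.homOfLE hVW =
          W'.fromSpecStalkOfMem (genericPoint S) (hVW hηV) := by
      intro V W' hVW hηV
      rw [← cancel_mono W'.ι, Category.assoc, Scheme.homOfLE_ι,
        Scheme.Opens.fromSpecStalkOfMem_ι, Scheme.Opens.fromSpecStalkOfMem_ι]
    -- glue
    let 𝒰 : S.OpenCover :=
      Scheme.Cover.mkOfCovers S (fun x => (U x).toScheme) (fun x => (U x).ι)
        (fun y => ⟨y, ⟨y, hxU y⟩, rfl⟩)
    have hcomp : ∀ x y : S,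
        pullback.fst ((U x).ι) ((U y).ι) ≫ g x = pullback.snd ((U x).ι) ((U y).ι) ≫ g y := by
      intro x y
      refine (cancel_epi (isPullback_opens_inf (U x) (U y)).isoPullback.hom).mp ?_
      rw [IsPullback.isoPullback_hom_fst_assoc, IsPullback.isoPullback_hom_snd_assoc]
      refine uniq (U x ⊓ U y) ⟨hηU x, hηU y⟩ _ _ ?_ ?_
      · rw [Category.assoc, Category.assoc, hgf, hgf, Scheme.homOfLE_ι, Scheme.homOfLE_ι]
      · rw [← Category.assoc, ← Category.assoc, hres inf_le_left ⟨hηU x, hηU y⟩,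
          hres inf_le_right ⟨hηU x, hηU y⟩, hgτ, hgτ]
    let σ0 : S ⟶ F := 𝒰.glueMorphisms (fun x => g x) hcomp
    have hglue : ∀ x : S, (U x).ι ≫ σ0 = g x := fun x =>
      𝒰.ι_glueMorphisms (fun x => g x) hcomp x
    have hσf : σ0 ≫ f = 𝟙 S := by
      apply 𝒰.hom_ext
      intro (x : S)
      have h := hgf x
      rw [← hglue x, Category.assoc] at h
      exact h.trans (Category.comp_id _).symm
    refine ⟨⟨σ0, hσf⟩, Subtype.ext ?_⟩
    show S.fromSpecResidueField (genericPoint S) ≫ σ0 = τ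
    have hstalk : S.fromSpecStalk (genericPoint S) ≫ σ0 = τ' := by
      rw [← Scheme.Opens.fromSpecStalkOfMem_ι (U (genericPoint S)) (genericPoint S)
        (hxU (genericPoint S)), Category.assoc, hglue, hgτ]
    rw [fromSpecResidueField_eq, Category.assoc, hstalk, hτ'def, IsIso.hom_inv_id_assoc]
end

section
/- Let G be a group acting on an abelian group B by additive automorphisms, and suppose B is torsion-free. Then for every abelian group R, the homomorphism j_R : B^G ⊗_ℤ R → B ⊗_ℤ R induced by tensoring the inclusion B^G ↪ B with the identity of R is injective. -/
open TensorProduct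

/-- The `ℤ`-submodule of `G`-fixed elements of an abelian group `B` with an action of a
group `G` by additive automorphisms. -/
def fixedSubmodule (G B : Type*) [Group G] [AddCommGroup B] [DistribMulAction G B] :
    Submodule ℤ B where
  carrier := {b | ∀ g : G, g • b = b}
  add_mem' := by
    intro a b ha hb g
    rw [smul_add, ha g, hb g]
  zero_mem' := fun g => smul_zero g
  smul_mem' := by
    intro n b hb g
    have h : g • (n • b) = n • (g • b) :=
      AddMonoidHom.map_zsmul (DistribMulAction.toAddMonoidHom B g) n b
    rw [h, hb g]

/-- A torsion-free module over `ℤ` is flat. -/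
theorem flat_of_torsionFree (Q : Type*) [AddCommGroup Q] [Module ℤ Q]
    (htf : ∀ a : ℤ, a ≠ 0 → Function.Injective (LinearMap.lsmul ℤ Q a)) :
    Module.Flat ℤ Q := by
  rw [Module.Flat.iff_rTensor_injective']
  intro I
  obtain ⟨a, ha⟩ := (IsPrincipalIdealRing.principal I).principal
  by_cases h0 : a = 0
  · subst h0
    have hI : I = ⊥ := by rw [ha, Submodule.span_zero_singleton]
    subst hI
    have : Subsingleton ((⊥ : Ideal ℤ) ⊗[ℤ] Q) := inferInstance
    exact fun x y _ => Subsingleton.elim x y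
  · have hamem : a ∈ I := ha ▸ Submodule.mem_span_singleton_self a
    set f : ℤ →ₗ[ℤ] I := LinearMap.toSpanSingleton ℤ I ⟨a, hamem⟩ with hf
    have hfsurj : Function.Surjective f := by
      rintro ⟨x, hx⟩
      rw [ha, Submodule.mem_span_singleton] at hx
      obtain ⟨k, rfl⟩ := hx
      exact ⟨k, rfl⟩
    have hfsurj' : Function.Surjective (LinearMap.rTensor Q f) :=
      LinearMap.rTensor_surjective Q hfsurj
    have hcomp : I.subtype.comp f = LinearMap.lsmul ℤ ℤ a := by
      refine LinearMap.ext fun k => ?_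
      simp only [LinearMap.coe_comp, Function.comp_apply, Submodule.coe_subtype, hf,
        LinearMap.toSpanSingleton_apply, LinearMap.lsmul_apply, smul_eq_mul]
      rw [Submodule.coe_smul]
      simp [mul_comm]
    have bridge : (TensorProduct.lid ℤ Q).toLinearMap.comp
        (LinearMap.rTensor Q (LinearMap.lsmul ℤ ℤ a)) =
        (LinearMap.lsmul ℤ Q a).comp (TensorProduct.lid ℤ Q).toLinearMap := by
      refine TensorProduct.ext' fun k q => ?_
      simp [smul_smul, mul_comm]
      rw [mul_comm]
      exact @mul_smul ℤ Q _ (Module.toDistribMulAction (R := ℤ) (M := Q)).toMulAction.toSemigroupAction k a q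
    have hinjls : Function.Injective (LinearMap.rTensor Q (LinearMap.lsmul ℤ ℤ a)) := by
      intro x y hxy
      have h1 : (LinearMap.lsmul ℤ Q a) ((TensorProduct.lid ℤ Q) x)
          = (LinearMap.lsmul ℤ Q a) ((TensorProduct.lid ℤ Q) y) := by
        have hx := LinearMap.congr_fun bridge x
        have hy := LinearMap.congr_fun bridge y
        simp only [LinearMap.coe_comp, Function.comp_apply, LinearMap.comp_apply, LinearEquiv.coe_coe] at hx hy
        rw [← hx, ← hy, hxy]
      exact (TensorProduct.lid ℤ Q).injective (htf a h0 h1)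
    have hinjcomp : Function.Injective (LinearMap.rTensor Q (I.subtype.comp f)) := by
      rw [hcomp]; exact hinjls
    rw [LinearMap.rTensor_comp] at hinjcomp
    intro x y hxy
    obtain ⟨x', rfl⟩ := hfsurj' x
    obtain ⟨y', rfl⟩ := hfsurj' y
    exact congrArg _ (hinjcomp (by simpa using hxy))

/-- If a group `G` acts on a torsion-free abelian group `B` by additive automorphisms,
then for every abelian group `R` the natural map `Bᴳ ⊗_ℤ R → B ⊗_ℤ R`, induced by
tensoring the inclusion `Bᴳ ↪ B` with the identity of `R`, is injective. -/
theorem rTensor_fixed_injective {G B : Type*} [Group G] [AddCommGroup B]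
    [DistribMulAction G B] [NoZeroSMulDivisors ℤ B]
    (R : Type*) [AddCommGroup R] :
    Function.Injective
      (LinearMap.rTensor R (fixedSubmodule G B).subtype :
        (fixedSubmodule G B) ⊗[ℤ] R →ₗ[ℤ] B ⊗[ℤ] R) := by
  classical
  set M := fixedSubmodule G B with hMdef
  set ι := M.subtype with hιdef
  -- the quotient `B ⧸ M` is torsion-free
  have hquot : ∀ a : ℤ, a ≠ 0 → Function.Injective (LinearMap.lsmul ℤ (B ⧸ M) a) := by
    intro a ha q q' h
    obtain ⟨b, rfl⟩ := Submodule.mkQ_surjective M q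
    obtain ⟨b', rfl⟩ := Submodule.mkQ_surjective M q'
    simp only [LinearMap.lsmul_apply, ← map_smul] at h
    rw [← sub_eq_zero, ← map_sub, ← smul_sub] at h
    rw [Submodule.mkQ_apply, Submodule.Quotient.mk_eq_zero] at h
    rw [← sub_eq_zero, ← map_sub, Submodule.mkQ_apply, Submodule.Quotient.mk_eq_zero]
    -- h : a • (b - b') ∈ M ; goal : b - b' ∈ M
    intro g
    have h2 : g • (a • (b - b')) = a • (b - b') := h g
    have h3 : g • (a • (b - b')) = a • (g • (b - b')) :=
      AddMonoidHom.map_zsmul (DistribMulAction.toAddMonoidHom B g) a (b - b')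
    have h4 : a • (g • (b - b') - (b - b')) = 0 := by
      rw [smul_sub, ← h3, h2, sub_self]
    rcases smul_eq_zero.mp h4 with h5 | h5
    · exact absurd h5 ha
    · exact sub_eq_zero.mp h5
  have hflatQ : Module.Flat ℤ (B ⧸ M) := flat_of_torsionFree _ hquot
  -- free presentation of R
  set π : (R →₀ ℤ) →ₗ[ℤ] R := Finsupp.linearCombination ℤ (id : R → R) with hπdef
  have hπsurj : Function.Surjective π := Finsupp.linearCombination_id_surjective ℤ R
  set K := LinearMap.ker π with hKdef
  set κ := K.subtype with hκdef
  have hexact : Function.Exact κ π := π.exact_subtype_ker_map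
  have hflatF : Module.Flat ℤ (R →₀ ℤ) := inferInstance
  -- the two flatness-based injectivity facts
  have hMF : Function.Injective (LinearMap.rTensor (R →₀ ℤ) ι) :=
    Module.Flat.rTensor_preserves_injective_linearMap ι M.injective_subtype
  have hQK : Function.Injective (LinearMap.lTensor (B ⧸ M) κ) :=
    Module.Flat.lTensor_preserves_injective_linearMap κ K.injective_subtype
  -- exactness facts
  have eMF : Function.Exact (κ.lTensor M) (π.lTensor M) :=
    lTensor_exact M hexact hπsurj
  have eBF : Function.Exact (κ.lTensor B) (π.lTensor B) :=
    lTensor_exact B hexact hπsurj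
  have eK : Function.Exact (ι.rTensor K) (M.mkQ.rTensor K) :=
    rTensor_exact (R := ℤ) K (LinearMap.exact_subtype_mkQ M) (Submodule.mkQ_surjective M)
  -- reduce to triviality of the kernel
  suffices hker : ∀ z : M ⊗[ℤ] R, LinearMap.rTensor R ι z = 0 → z = 0 by
    intro x y hxy
    have h0 : LinearMap.rTensor R ι (x - y) = 0 := by rw [map_sub, hxy, sub_self]
    exact sub_eq_zero.mp (hker _ h0)
  intro x hx
  obtain ⟨x', rfl⟩ := LinearMap.lTensor_surjective M hπsurj x
  -- y := image of x' in B ⊗ F is killed by π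
  have hnat1 : (π.lTensor B).comp (ι.rTensor (R →₀ ℤ)) = (ι.rTensor R).comp (π.lTensor M) := by
    rw [LinearMap.lTensor_comp_rTensor, LinearMap.rTensor_comp_lTensor]
  have hy0 : (π.lTensor B) (ι.rTensor (R →₀ ℤ) x') = 0 := by
    have := LinearMap.congr_fun hnat1 x'
    simp only [LinearMap.coe_comp, Function.comp_apply, LinearMap.comp_apply] at this
    rw [this, hx]
  -- so it comes from B ⊗ K
  obtain ⟨z, hz⟩ := (eBF _).mp hy0
  -- push z to (B ⧸ M) ⊗ K; it dies
  have hnat2 : (κ.lTensor (B ⧸ M)).comp (M.mkQ.rTensor K)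
      = (M.mkQ.rTensor (R →₀ ℤ)).comp (κ.lTensor B) := by
    rw [LinearMap.lTensor_comp_rTensor, LinearMap.rTensor_comp_lTensor]
  have hmkι : M.mkQ.comp ι = 0 := by
    refine LinearMap.ext fun m => ?_
    simp only [LinearMap.comp_apply, Submodule.mkQ_apply, LinearMap.zero_apply,
      Submodule.Quotient.mk_eq_zero]
    exact m.2
  have hzQ : (κ.lTensor (B ⧸ M)) ((M.mkQ.rTensor K) z) = 0 := by
    have h6 := LinearMap.congr_fun hnat2 z
    simp only [LinearMap.coe_comp, Function.comp_apply, LinearMap.comp_apply] at h6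
    rw [h6, hz]
    have h7 : (M.mkQ.rTensor (R →₀ ℤ)).comp (ι.rTensor (R →₀ ℤ)) = 0 := by
      rw [← LinearMap.rTensor_comp, hmkι, LinearMap.rTensor_zero]
    have h8 := LinearMap.congr_fun h7 x'
    simp only [LinearMap.coe_comp, Function.comp_apply, LinearMap.zero_apply] at h8
    exact h8
  have hzK : (M.mkQ.rTensor K) z = 0 :=
    hQK (by rw [hzQ, map_zero])
  -- so z comes from M ⊗ K
  obtain ⟨w, hw⟩ := (eK _).mp hzK
  -- conclude
  have hnat3 : (κ.lTensor B).comp (ι.rTensor K) = (ι.rTensor (R →₀ ℤ)).comp (κ.lTensor M) := by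
    rw [LinearMap.lTensor_comp_rTensor, LinearMap.rTensor_comp_lTensor]
  have hw' : (ι.rTensor (R →₀ ℤ)) ((κ.lTensor M) w) = (ι.rTensor (R →₀ ℤ)) x' := by
    have h9 := LinearMap.congr_fun hnat3 w
    simp only [LinearMap.coe_comp, Function.comp_apply, LinearMap.comp_apply] at h9
    rw [← h9, hw, hz]
  have hwx : (κ.lTensor M) w = x' := hMF hw'
  have hπκ : π.comp κ = 0 := by
    refine LinearMap.ext fun k => ?_
    have hk : π (κ k) = 0 := LinearMap.mem_ker.mp k.2
    simpa using hk
  have h10 : (π.lTensor M).comp (κ.lTensor M) = 0 := by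
    rw [← LinearMap.lTensor_comp, hπκ, LinearMap.lTensor_zero]
  have h11 := LinearMap.congr_fun h10 w
  simp only [LinearMap.coe_comp, Function.comp_apply, LinearMap.comp_apply, LinearMap.zero_apply] at h11
  rw [← hwx, h11]
end

section
/- Let G be a finite group acting on a torsion-free abelian group B by additive automorphisms, and let G act on B ⊗_ℤ R (for any abelian group R) through the first factor, i.e., by g·(b ⊗ r) = (g·b) ⊗ r. Then the image of the natural map j_R : B^G ⊗_ℤ R → B ⊗_ℤ R is contained in the fixed subgroup (B ⊗_ℤ R)^G; and if for every prime number p the image of j_{ℤ/pℤ} : B^G ⊗_ℤ ℤ/pℤ → B ⊗_ℤ ℤ/pℤ equals all of (B ⊗_ℤ ℤ/pℤ)^G, then for every abelian group R the image of j_R equals all of (B ⊗_ℤ R)^G (so that j_R is a bijection from B^G ⊗_ℤ R onto (B ⊗_ℤ R)^G, being injective by torsion-freeness of B). -/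
open TensorProduct

section Helpers

open LinearMap

/-- A torsion-free abelian group is a flat `ℤ`-module. -/
lemma flat_of_torsionFree' (M : Type*) [AddCommGroup M]
    [NoZeroSMulDivisors ℤ M] : Module.Flat ℤ M := by
  rw [Module.Flat.iff_rTensor_injective']
  intro I
  obtain ⟨n, rfl⟩ := (IsPrincipalIdealRing.principal I).principal
  rcases eq_or_ne n 0 with rfl | hn
  · have hz : ∀ x : (Ideal.span ({0} : Set ℤ)) ⊗[ℤ] M, x = 0 := by
      intro x
      induction x with
      | zero => rfl
      | tmul a m =>
          have : a = 0 := by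
            ext
            obtain ⟨k, hk⟩ := Ideal.mem_span_singleton'.mp a.2
            simpa using hk.symm
          rw [this, zero_tmul]
      | add y z hy hz => rw [hy, hz, add_zero]
    intro x y _
    rw [hz x, hz y]
  · have hnm : n ∈ Ideal.span ({n} : Set ℤ) := Ideal.mem_span_singleton_self n
    have hrep : ∀ x : (Ideal.span ({n} : Set ℤ)) ⊗[ℤ] M,
        ∃ m : M, x = (⟨n, hnm⟩ : Ideal.span ({n} : Set ℤ)) ⊗ₜ[ℤ] m := by
      intro x
      induction x with
      | zero => exact ⟨0, (tmul_zero _ _).symm⟩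
      | tmul a m =>
          obtain ⟨k, hk⟩ := Ideal.mem_span_singleton'.mp a.2
          refine ⟨k • m, ?_⟩
          have ha : a = k • (⟨n, hnm⟩ : Ideal.span ({n} : Set ℤ)) := by
            ext
            simpa using hk.symm
          rw [ha, smul_tmul]
      | add y z hy hz =>
          obtain ⟨m₁, rfl⟩ := hy
          obtain ⟨m₂, rfl⟩ := hz
          exact ⟨m₁ + m₂, (tmul_add _ _ _).symm⟩
    rw [← ker_eq_bot, eq_bot_iff]
    intro x hx
    obtain ⟨m, rfl⟩ := hrep x
    have h0 : (n : ℤ) ⊗ₜ[ℤ] m = (0 : ℤ ⊗[ℤ] M) := hx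
    have hsm : n • m = 0 := by
      have h1 := congrArg (TensorProduct.lid ℤ M) h0
      rwa [map_zero, TensorProduct.lid_tmul] at h1
    rcases smul_eq_zero.mp hsm with h | h
    · exact absurd h hn
    · rw [h, tmul_zero]
      exact Submodule.zero_mem _

/-- If the cokernel of an injective map `ι : D → P` of `ℤ`-modules is flat, then
`ι ⊗ 1 : D ⊗ R → P ⊗ R` is injective for every `R`. -/
lemma rTensor_injective_of_flat_coker' {D P : Type*} [AddCommGroup D] [AddCommGroup P]
    (ι : D →ₗ[ℤ] P) (hinj : Function.Injective ι)
    (hflat : Module.Flat ℤ (P ⧸ LinearMap.range ι))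
    (R : Type*) [AddCommGroup R] :
    Function.Injective (LinearMap.rTensor R ι) := by
  set Q := P ⧸ LinearMap.range ι
  set F := (R →₀ ℤ)
  set π : F →ₗ[ℤ] R := Finsupp.linearCombination ℤ (id : R → R) with hπdef
  have hπ : Function.Surjective π := Finsupp.linearCombination_id_surjective ℤ R
  set K := ker π
  set κ : K →ₗ[ℤ] F := K.subtype
  set ρ : P →ₗ[ℤ] Q := (LinearMap.range ι).mkQ
  have hρι : ρ.comp ι = 0 := by
    ext d
    simp only [comp_apply, LinearMap.zero_apply]
    exact (Submodule.Quotient.mk_eq_zero _).mpr (mem_range_self ι d)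
  have hπκ : π.comp κ = 0 := by
    ext k
    exact k.2
  rw [← ker_eq_bot, eq_bot_iff]
  intro x hx
  rw [mem_ker] at hx
  obtain ⟨y, rfl⟩ := lTensor_surjective D hπ x
  set z := rTensor F ι y with hzdef
  have hz : lTensor P π z = 0 := by
    have h1 : lTensor P π (rTensor F ι y) = rTensor R ι (lTensor D π y) := by
      rw [← comp_apply, ← comp_apply, lTensor_comp_rTensor, rTensor_comp_lTensor]
    rw [hzdef, h1, hx]
  obtain ⟨w, hw⟩ := (lTensor_exact P (LinearMap.exact_subtype_ker_map π) hπ z).mp hz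
  have hQw : rTensor K ρ w = 0 := by
    have hQinj : Function.Injective (lTensor Q κ) :=
      Module.Flat.lTensor_preserves_injective_linearMap κ (Submodule.injective_subtype K)
    apply hQinj
    rw [map_zero]
    have h2 : lTensor Q κ (rTensor K ρ w) = rTensor F ρ (lTensor P κ w) := by
      rw [← comp_apply, ← comp_apply, lTensor_comp_rTensor, rTensor_comp_lTensor]
    rw [h2, hw, hzdef, ← comp_apply, ← rTensor_comp, hρι, rTensor_zero, LinearMap.zero_apply]
  obtain ⟨v, hv⟩ := (rTensor_exact K (LinearMap.exact_map_mkQ_range ι)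
      (Submodule.mkQ_surjective _) w).mp hQw
  have hy : lTensor D κ v = y := by
    have hFinj : Function.Injective (rTensor F ι) :=
      Module.Flat.rTensor_preserves_injective_linearMap ι hinj
    apply hFinj
    have h3 : rTensor F ι (lTensor D κ v) = lTensor P κ (rTensor K ι v) := by
      rw [← comp_apply, ← comp_apply, lTensor_comp_rTensor, rTensor_comp_lTensor]
    rw [h3, hv, hw]
  rw [Submodule.mem_bot, ← hy, ← comp_apply, ← lTensor_comp, hπκ, lTensor_zero, LinearMap.zero_apply]

/-- An element of `(ι → M) ⊗ R` all of whose components vanish is zero (`ι` finite). -/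
lemma pi_tensor_eq_zero' {ι : Type*} [Fintype ι] [DecidableEq ι] (M R : Type*)
    [AddCommGroup M] [AddCommGroup R] (x : (ι → M) ⊗[ℤ] R)
    (hx : ∀ i, rTensor R (LinearMap.proj i) x = 0) : x = 0 := by
  let e : ((ι → M) ⊗[ℤ] R) ≃ₗ[ℤ] (ι → M ⊗[ℤ] R) :=
    (TensorProduct.comm ℤ (ι → M) R) ≪≫ₗ (TensorProduct.piRight ℤ ℤ R (fun _ : ι => M))
      ≪≫ₗ (LinearEquiv.piCongrRight (fun _ : ι => TensorProduct.comm ℤ R M))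
  have key : ∀ i : ι, (LinearMap.proj i) ∘ₗ (e : ((ι → M) ⊗[ℤ] R) →ₗ[ℤ] (ι → M ⊗[ℤ] R)) =
      rTensor R (LinearMap.proj i) := by
    intro i
    apply TensorProduct.ext'
    intro f r
    show e (f ⊗ₜ r) i = (f i) ⊗ₜ r
    simp [e]
    rfl
  apply e.injective
  rw [map_zero]
  funext i
  have := congrArg (fun (φ : ((ι → M) ⊗[ℤ] R) →ₗ[ℤ] (M ⊗[ℤ] R)) => φ x) (key i)
  simpa using this.trans (hx i)

end Helpers

/-- The action of `g : G` on `B` as a `ℤ`-linear map. -/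
def smulLinearMap {G B : Type*} [Group G] [AddCommGroup B] [DistribMulAction G B]
    (g : G) : B →ₗ[ℤ] B where
  toFun b := g • b
  map_add' := smul_add g
  map_smul' n b := by
    have h : g • (n • b) = n • (g • b) :=
      AddMonoidHom.map_zsmul (DistribMulAction.toAddMonoidHom B g) n b
    simpa using h

/-- Let a finite group `G` act on a torsion-free abelian group `B` by additive
automorphisms, and let `G` act on `B ⊗_ℤ R` through the first factor.  Then the image
of the natural map `j_R : Bᴳ ⊗_ℤ R → B ⊗_ℤ R` consists of `G`-fixed elements; and if
for every prime `p` the image of `j_{ℤ/pℤ}` equals all of `(B ⊗_ℤ ℤ/pℤ)ᴳ`, then for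
every abelian group `R` the image of `j_R` equals all of `(B ⊗_ℤ R)ᴳ`. -/
theorem rTensor_fixed_surjective_of_primes {G B : Type*} [Group G] [Finite G]
    [AddCommGroup B] [DistribMulAction G B] [NoZeroSMulDivisors ℤ B] :
    (∀ (R : Type*) [AddCommGroup R]
      (x : (fixedSubmodule G B) ⊗[ℤ] R) (g : G),
        LinearMap.rTensor R (smulLinearMap g)
            (LinearMap.rTensor R (fixedSubmodule G B).subtype x) =
          LinearMap.rTensor R (fixedSubmodule G B).subtype x) ∧
    ((∀ p : ℕ, p.Prime →
        ∀ t : B ⊗[ℤ] ZMod p,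
          (∀ g : G, LinearMap.rTensor (ZMod p) (smulLinearMap g) t = t) →
          t ∈ LinearMap.range (LinearMap.rTensor (ZMod p) (fixedSubmodule G B).subtype)) →
      ∀ (R : Type*) [AddCommGroup R] (t : B ⊗[ℤ] R),
        (∀ g : G, LinearMap.rTensor R (smulLinearMap g) t = t) →
        t ∈ LinearMap.range (LinearMap.rTensor R (fixedSubmodule G B).subtype)) := by
  classical
  constructor
  · intro R _ x g
    have h : (smulLinearMap g).comp (fixedSubmodule G B).subtype
        = (fixedSubmodule G B).subtype := by
      ext a
      exact a.2 g
    rw [← LinearMap.rTensor_comp_apply, h]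
  · intro hp R _ t ht
    cases nonempty_fintype G
    -- the key linear map φ : B → (G → B), b ↦ (g ↦ g • b - b)
    set ψ : G → (B →ₗ[ℤ] B) := fun g => smulLinearMap g - LinearMap.id with hψdef
    set φ : B →ₗ[ℤ] (G → B) := LinearMap.pi ψ with hφdef
    have hφ_apply : ∀ (b : B) (g : G), φ b g = g • b - b := fun b g => rfl
    have hker : LinearMap.ker φ = fixedSubmodule G B := by
      ext b
      simp only [LinearMap.mem_ker]
      constructor
      · intro h g
        have h2 := congrFun h g
        rw [hφ_apply] at h2
        · exact sub_eq_zero.mp (by simpa using h2)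
      · intro h
        funext g
        rw [hφ_apply]
        · exact sub_eq_zero.mpr (h g)
    -- "division by a prime" inside the range of φ
    have hstep : ∀ p : ℕ, p.Prime → ∀ q : G → B,
        ((p : ℤ) • q ∈ LinearMap.range φ) → q ∈ LinearMap.range φ := by
      intro p hpp q hq
      obtain ⟨b, hb⟩ := hq
      set S : Submodule ℤ B :=
        fixedSubmodule G B ⊔ LinearMap.range ((p : ℤ) • (LinearMap.id : B →ₗ[ℤ] B)) with hSdef
      have hpS : ∀ x : B ⧸ S, (p : ℕ) • x = 0 := by
        intro x
        obtain ⟨b'', rfl⟩ := Submodule.Quotient.mk_surjective S x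
        have h1 : (p : ℕ) • (Submodule.Quotient.mk b'' : B ⧸ S)
            = (p : ℤ) • (Submodule.Quotient.mk b'' : B ⧸ S) := (natCast_zsmul _ _).symm
        rw [h1, ← Submodule.Quotient.mk_smul, Submodule.Quotient.mk_eq_zero]
        exact Submodule.mem_sup_right ⟨b'', rfl⟩
      letI : Module (ZMod p) (B ⧸ S) := AddCommGroup.zmodModule hpS
      have hcast : ∀ (z : ℤ) (v : B ⧸ S), ((z : ZMod p)) • v = z • v := fun z v =>
        Int.cast_smul_eq_zsmul (ZMod p) z v
      -- the evaluation map θ : B ⊗ ℤ/p → B ⧸ S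
      set θ₀ : B →ₗ[ℤ] (ZMod p →ₗ[ℤ] B ⧸ S) :=
        { toFun := fun b' =>
            { toFun := fun c => c • (Submodule.Quotient.mk b' : B ⧸ S)
              map_add' := fun c c' => add_smul c c' _
              map_smul' := fun z c => by
                simp only [RingHom.id_apply]
                rw [zsmul_eq_mul, mul_smul, hcast] }
          map_add' := by
            intro b₁ b₂
            ext c
            simp only [LinearMap.coe_mk, AddHom.coe_mk, LinearMap.add_apply]
            rw [Submodule.Quotient.mk_add, smul_add]
          map_smul' := by
            intro z b'
            ext c
            simp only [LinearMap.coe_mk, AddHom.coe_mk, RingHom.id_apply, LinearMap.smul_apply]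
            rw [Submodule.Quotient.mk_smul, ← hcast z, smul_comm, hcast] } with hθ₀def
      set θ : B ⊗[ℤ] ZMod p →ₗ[ℤ] B ⧸ S := TensorProduct.lift θ₀ with hθdef
      have hfix : ∀ g : G,
          LinearMap.rTensor (ZMod p) (smulLinearMap g) (b ⊗ₜ (1 : ZMod p)) = b ⊗ₜ 1 := by
        intro g
        have h2 := congrFun hb g
        rw [hφ_apply, Pi.smul_apply] at h2
        have hgb : g • b = (p : ℤ) • q g + b := sub_eq_iff_eq_add.mp h2
        rw [LinearMap.rTensor_tmul]
        show (g • b) ⊗ₜ (1 : ZMod p) = b ⊗ₜ 1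
        rw [hgb, add_tmul, smul_tmul]
        have hone : ((p : ℤ)) • (1 : ZMod p) = 0 := by
          rw [zsmul_eq_mul, mul_one]
          exact_mod_cast ZMod.natCast_self p
        rw [hone, tmul_zero, zero_add]
      obtain ⟨u, hu⟩ := hp p hpp (b ⊗ₜ 1) hfix
      have hθcomp : θ.comp (LinearMap.rTensor (ZMod p) (fixedSubmodule G B).subtype) = 0 := by
        apply TensorProduct.ext'
        intro a c
        show θ (LinearMap.rTensor (ZMod p) (fixedSubmodule G B).subtype (a ⊗ₜ c)) = 0
        have hmk : (Submodule.Quotient.mk (a : B) : B ⧸ S) = 0 :=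
          (Submodule.Quotient.mk_eq_zero _).mpr (Submodule.mem_sup_left a.2)
        simp only [LinearMap.comp_apply, LinearMap.rTensor_tmul, hθdef, TensorProduct.lift.tmul,
          hθ₀def, LinearMap.coe_mk, AddHom.coe_mk, LinearMap.zero_apply, Submodule.coe_subtype]
        show c • (Submodule.Quotient.mk (a : B) : B ⧸ S) = 0
        rw [hmk, smul_zero]
      have hbS : b ∈ S := by
        have h1 : θ (b ⊗ₜ 1) = Submodule.Quotient.mk b := by
          simp only [hθdef, TensorProduct.lift.tmul, hθ₀def, LinearMap.coe_mk, AddHom.coe_mk]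
          exact one_smul _ _
        have h2 : θ (b ⊗ₜ 1) = 0 := by
          rw [← hu]
          exact LinearMap.congr_fun hθcomp u
        rw [h1] at h2
        exact (Submodule.Quotient.mk_eq_zero _).mp h2
      obtain ⟨a, ha, s, hs, hsum⟩ := Submodule.mem_sup.mp hbS
      obtain ⟨b', hb'⟩ := hs
      have hφa : φ a = 0 := by
        funext g
        rw [hφ_apply]
        · exact sub_eq_zero.mpr (ha g)
      have hφb : φ b = (p : ℤ) • φ b' := by
        rw [← hsum, map_add, hφa, zero_add, ← hb']
        simp only [LinearMap.smul_apply, LinearMap.id_apply, map_smul]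
      have hq' : q = φ b' := by
        have hps : (p : ℤ) • q = (p : ℤ) • φ b' := by rw [← hb, hφb]
        have hp0 : (p : ℤ) ≠ 0 := Int.natCast_ne_zero.mpr hpp.ne_zero
        exact smul_right_injective (G → B) hp0 hps
      exact ⟨b', hq'.symm⟩
    -- division by arbitrary positive integers
    have hind : ∀ n : ℕ, 0 < n → ∀ q : G → B,
        (n : ℤ) • q ∈ LinearMap.range φ → q ∈ LinearMap.range φ := by
      intro n
      induction n using Nat.strong_induction_on with
      | _ n IH =>
        intro hn q hq
        rcases eq_or_ne n 1 with rfl | hn1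
        · simpa using hq
        · have hpf : (n.minFac).Prime := Nat.minFac_prime hn1
          have hmn : n.minFac * (n / n.minFac) = n := Nat.mul_div_cancel' (Nat.minFac_dvd n)
          have hm0 : 0 < n / n.minFac := Nat.div_pos (Nat.minFac_le hn) hpf.pos
          have hmlt : n / n.minFac < n := Nat.div_lt_self hn hpf.one_lt
          have h1 : ((n.minFac : ℤ)) • (((n / n.minFac : ℕ) : ℤ) • q) ∈ LinearMap.range φ := by
            rw [smul_smul, ← Nat.cast_mul, hmn]
            exact hq
          exact IH _ hmlt hm0 q (hstep _ hpf _ h1)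
    -- the quotient (G → B) ⧸ range φ is torsion-free, hence flat
    haveI htf : NoZeroSMulDivisors ℤ ((G → B) ⧸ LinearMap.range φ) := by
      constructor
      intro z x hzx
      rcases eq_or_ne z 0 with rfl | hz0
      · exact Or.inl rfl
      refine Or.inr ?_
      obtain ⟨q, rfl⟩ := Submodule.Quotient.mk_surjective _ x
      rw [← Submodule.Quotient.mk_smul, Submodule.Quotient.mk_eq_zero] at hzx
      rw [Submodule.Quotient.mk_eq_zero]
      have hnat : ((z.natAbs : ℤ)) • q ∈ LinearMap.range φ := by
        rcases Int.natAbs_eq z with h | h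
        · have h2 : ((z.natAbs : ℤ)) = z := by omega
          rwa [h2]
        · have h2 : ((z.natAbs : ℤ)) = -z := by omega
          rw [h2, neg_smul]
          exact neg_mem hzx
      exact hind z.natAbs (Int.natAbs_pos.mpr hz0) q hnat
    haveI hflatQ : Module.Flat ℤ ((G → B) ⧸ LinearMap.range φ) := flat_of_torsionFree' _
    have hpure : Function.Injective (LinearMap.rTensor R (LinearMap.range φ).subtype) := by
      refine rTensor_injective_of_flat_coker' _ (Submodule.injective_subtype _) ?_ R
      rw [Submodule.range_subtype]
      exact hflatQ
    have hexact0 : Function.Exact ((fixedSubmodule G B).subtype) φ.rangeRestrict := by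
      rw [LinearMap.exact_iff]
      rw [LinearMap.ker_rangeRestrict, hker, Submodule.range_subtype]
    have hTexact := rTensor_exact R hexact0 (LinearMap.surjective_rangeRestrict φ)
    have hφt : LinearMap.rTensor R φ t = 0 := by
      apply pi_tensor_eq_zero'
      intro g
      rw [← LinearMap.rTensor_comp_apply, LinearMap.proj_pi]
      show LinearMap.rTensor R (smulLinearMap g - LinearMap.id) t = 0
      rw [LinearMap.rTensor_sub, LinearMap.sub_apply, LinearMap.rTensor_id, ht g,
        LinearMap.id_apply, sub_self]
    have hzero : LinearMap.rTensor R φ.rangeRestrict t = 0 := by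
      apply hpure
      rw [map_zero, ← LinearMap.rTensor_comp_apply, LinearMap.subtype_comp_codRestrict]
      exact hφt
    obtain ⟨u, hu⟩ := (hTexact t).mp hzero
    exact ⟨u, hu⟩
end
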